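/- Let X satisfy E X = 0, E X² = 1, and E e^{α|X|} ≤ 2 (α > 0). Then the third derivative of the log-Laplace transform K(z) = log E e^{zX} satisfies |K'''(z)| ≤ 8/α³ for all complex z with |z| ≤ α/16, and consequently |K''(z) − 1| ≤ 1/2 for |z| ≤ α³/16. -/

import Mathlib

open MeasureTheory ProbabilityTheory

private lemma aux_pow_le_exp (k : ℕ) {x : ℝ} (hx : 0 ≤ x) :
    x ^ k ≤ ((k : ℝ) / Real.exp 1) ^ k * Real.exp x := by
  rcases Nat.eq_zero_or_pos k with rfl | hk
  · simpa using Real.one_le_exp hx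
  · have hkpos : (0 : ℝ) < k := by exact_mod_cast hk
    have h1 : x / k ≤ Real.exp (x / k) / Real.exp 1 := by
      rw [← Real.exp_sub]
      have := Real.add_one_le_exp (x / k - 1); linarith
    have h2 : x ≤ (k : ℝ) / Real.exp 1 * Real.exp (x / k) := by
      calc x = x / k * k := by field_simp
        _ ≤ Real.exp (x / k) / Real.exp 1 * k := by gcongr
        _ = (k : ℝ) / Real.exp 1 * Real.exp (x / k) := by ring
    calc x ^ k ≤ ((k : ℝ) / Real.exp 1 * Real.exp (x / k)) ^ k :=
          pow_le_pow_left₀ hx h2 k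
      _ = ((k : ℝ) / Real.exp 1) ^ k * Real.exp (x / k) ^ k := mul_pow _ _ _
      _ = ((k : ℝ) / Real.exp 1) ^ k * Real.exp x := by
          rw [← Real.exp_nat_mul]; congr 1; field_simp

private lemma aux_exp_sub_one (w : ℂ) :
    ‖Complex.exp w - 1‖ ≤ ‖w‖ * Real.exp ‖w‖ := by
  have hd : ∀ t : ℝ, HasDerivAt (fun t : ℝ => Complex.exp ((t : ℂ) * w))
      (Complex.exp ((t : ℂ) * w) * w) t := by
    intro t
    have h1 : HasDerivAt (fun t : ℝ => (t : ℂ) * w) w t := by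
      simpa using (Complex.ofRealCLM.hasDerivAt (x := t)).mul_const w
    simpa using h1.cexp
  have hconv : Convex ℝ (Set.Icc (0:ℝ) 1) := convex_Icc 0 1
  have key := hconv.norm_image_sub_le_of_norm_hasDerivWithin_le
    (f := fun t : ℝ => Complex.exp ((t : ℂ) * w))
    (f' := fun t : ℝ => Complex.exp ((t : ℂ) * w) * w)
    (C := Real.exp ‖w‖ * ‖w‖)
    (fun t ht => (hd t).hasDerivWithinAt)
    (fun t ht => by
      rw [norm_mul, Complex.norm_exp]
      have hre : ((t : ℂ) * w).re ≤ ‖w‖ := by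
        rw [Complex.mul_re]
        simp only [Complex.ofReal_re, Complex.ofReal_im, zero_mul, sub_zero]
        calc t * w.re ≤ |t * w.re| := le_abs_self _
          _ = |t| * |w.re| := abs_mul _ _
          _ ≤ 1 * ‖w‖ := by
            apply mul_le_mul
            · rw [abs_of_nonneg ht.1]; exact ht.2
            · exact (Complex.abs_re_le_norm w)
            · positivity
            · norm_num
          _ = ‖w‖ := one_mul _
      gcongr
      )
    (Set.left_mem_Icc.mpr zero_le_one) (Set.right_mem_Icc.mpr zero_le_one)
  simpa [mul_comm] using key

private noncomputable def Fm {Ω : Type*} [MeasurableSpace Ω] (P : Measure Ω) (X : Ω → ℝ)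
    (k : ℕ) (z : ℂ) : ℂ := ∫ ω, (X ω : ℂ) ^ k * Complex.exp (z * X ω) ∂P

set_option maxHeartbeats 2000000 in
/-- If `E X = 0`, `E X² = 1` and `E e^{α|X|} ≤ 2` (`α > 0`), then the log-Laplace transform
`K(z) = log E e^{zX}` satisfies `|K'''(z)| ≤ 8/α³` on `|z| ≤ α/16`, and consequently
`|K''(z) − 1| ≤ 1/2` on `|z| ≤ α³/16`. -/
theorem stmt_7 {Ω : Type*} [MeasurableSpace Ω] {P : Measure Ω} [IsProbabilityMeasure P]
    (X : Ω → ℝ) (hmeas : Measurable X) (α : ℝ) (hα : 0 < α)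
    (hmean : ∫ ω, X ω ∂P = 0) (hvar : ∫ ω, (X ω) ^ 2 ∂P = 1)
    (hexp : ∫⁻ ω, ENNReal.ofReal (Real.exp (α * |X ω|)) ∂P ≤ 2)
    (K : ℂ → ℂ)
    (hK : ∀ z : ℂ, K z = Complex.log (∫ ω, Complex.exp (z * X ω) ∂P)) :
    (∀ z : ℂ, ‖z‖ ≤ α / 16 → ‖iteratedDeriv 3 K z‖ ≤ 8 / α ^ 3) ∧
    (∀ z : ℂ, ‖z‖ ≤ α ^ 3 / 16 → ‖iteratedDeriv 2 K z - 1‖ ≤ 1 / 2) := by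
  set e1 : ℝ := Real.exp 1 with he1def
  have he1 : (2.7:ℝ) ≤ e1 := by
    have := Real.exp_one_gt_d9; rw [he1def]; linarith
  have he1pos : (0:ℝ) < e1 := by linarith
  -- integrability of the master dominator
  have hMmeas : Measurable fun ω => Real.exp (α * |X ω|) :=
    (measurable_const.mul hmeas.abs).exp
  have hMint : Integrable (fun ω => Real.exp (α * |X ω|)) P := by
    refine ⟨hMmeas.aestronglyMeasurable, ?_⟩
    rw [hasFiniteIntegral_iff_ofReal (Filter.Eventually.of_forall fun ω => (Real.exp_pos _).le)]
    exact lt_of_le_of_lt hexp (by norm_num)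
  have hM2 : ∫ ω, Real.exp (α * |X ω|) ∂P ≤ 2 := by
    rw [integral_eq_lintegral_of_nonneg_ae
      (Filter.Eventually.of_forall fun ω => (Real.exp_pos _).le) hMmeas.aestronglyMeasurable]
    refine ENNReal.toReal_le_of_le_ofReal (by norm_num) (hexp.trans ?_)
    norm_num
  -- pointwise domination
  have hptwise : ∀ (k : ℕ) (t : ℝ), 0 ≤ t →
      t ^ k * Real.exp (α/7 * t) ≤ (7*k/(6*e1*α)) ^ k * Real.exp (α * t) := by
    intro k t ht
    have h6 : (0:ℝ) < (6*α/7) ^ k := by positivity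
    rw [← mul_le_mul_iff_right₀ h6]
    have hb := aux_pow_le_exp k (x := 6*α/7*t) (by positivity)
    calc (6*α/7)^k * (t^k * Real.exp (α/7*t)) = (6*α/7*t)^k * Real.exp (α/7*t) := by
          rw [mul_pow]; ring
      _ ≤ ((k:ℝ)/e1)^k * Real.exp (6*α/7*t) * Real.exp (α/7*t) := by
          rw [← he1def] at hb
          exact mul_le_mul_of_nonneg_right hb (Real.exp_pos _).le
      _ = ((k:ℝ)/e1)^k * Real.exp (α*t) := by
          rw [mul_assoc, ← Real.exp_add]; congr 2; ring
      _ = (6*α/7)^k * ((7*k/(6*e1*α))^k * Real.exp (α*t)) := by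
          rw [← mul_assoc, ← mul_pow]; congr 2; field_simp
  -- the master moment functions
  have hGmeas : ∀ k : ℕ, Measurable fun ω => |X ω|^k * Real.exp (α/7 * |X ω|) := fun k =>
    (hmeas.abs.pow_const k).mul (measurable_const.mul hmeas.abs).exp
  have hGint : ∀ k : ℕ, Integrable (fun ω => |X ω|^k * Real.exp (α/7 * |X ω|)) P := by
    intro k
    refine ((hMint.const_mul ((7*k/(6*e1*α))^k)).mono' (hGmeas k).aestronglyMeasurable ?_)
    refine Filter.Eventually.of_forall fun ω => ?_
    rw [Real.norm_eq_abs, abs_of_nonneg (by positivity)]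
    exact hptwise k _ (abs_nonneg _)
  have hGval : ∀ k : ℕ, ∫ ω, |X ω|^k * Real.exp (α/7 * |X ω|) ∂P ≤ 2 * (7*k/(6*e1*α))^k := by
    intro k
    calc ∫ ω, |X ω|^k * Real.exp (α/7 * |X ω|) ∂P
        ≤ ∫ ω, (7*k/(6*e1*α))^k * Real.exp (α * |X ω|) ∂P :=
          integral_mono (hGint k) (hMint.const_mul _)
            (fun ω => hptwise k _ (abs_nonneg _))
      _ = (7*k/(6*e1*α))^k * ∫ ω, Real.exp (α * |X ω|) ∂P := integral_const_mul _ _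
      _ ≤ (7*k/(6*e1*α))^k * 2 := by
          exact mul_le_mul_of_nonneg_left hM2 (by positivity)
      _ = 2 * (7*k/(6*e1*α))^k := by ring
  -- norm of the integrand
  have hnormIntLe : ∀ (k : ℕ) (z : ℂ), ‖z‖ ≤ α/7 → ∀ ω : Ω,
      ‖(X ω : ℂ) ^ k * Complex.exp (z * X ω)‖ ≤ |X ω|^k * Real.exp (α/7 * |X ω|) := by
    intro k z hz ω
    rw [norm_mul, norm_pow, Complex.norm_real, Real.norm_eq_abs,
      Complex.norm_exp]
    have hre : (z * (X ω : ℂ)).re = z.re * X ω := by simp [Complex.mul_re]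
    rw [hre]
    have : z.re * X ω ≤ α/7 * |X ω| := by
      calc z.re * X ω ≤ |z.re * X ω| := le_abs_self _
        _ = |z.re| * |X ω| := abs_mul _ _
        _ ≤ (α/7) * |X ω| := by
          have : |z.re| ≤ α / 7 := (Complex.abs_re_le_norm z).trans hz
          gcongr
    gcongr
  have hImeas : ∀ (k : ℕ) (z : ℂ), AEStronglyMeasurable
      (fun ω => (X ω : ℂ) ^ k * Complex.exp (z * X ω)) P := by
    intro k z
    exact (((Complex.measurable_ofReal.comp hmeas).pow_const k).mul
      ((Complex.measurable_ofReal.comp hmeas).const_mul z).cexp).aestronglyMeasurable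
  have hIint : ∀ (k : ℕ) (z : ℂ), ‖z‖ ≤ α/7 →
      Integrable (fun ω => (X ω : ℂ) ^ k * Complex.exp (z * X ω)) P := by
    intro k z hz
    exact (hGint k).mono' (hImeas k z)
      (Filter.Eventually.of_forall fun ω => hnormIntLe k z hz ω)
  -- derivative of Fm
  have hDeriv : ∀ (k : ℕ) (z₀ : ℂ), ‖z₀‖ < α/7 →
      HasDerivAt (Fm P X k) (Fm P X (k+1) z₀) z₀ := by
    intro k z₀ hz₀
    have hε : 0 < α/7 - ‖z₀‖ := by linarith
    have := hasDerivAt_integral_of_dominated_loc_of_deriv_le (μ := P)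
      (F := fun z ω => (X ω : ℂ) ^ k * Complex.exp (z * X ω))
      (F' := fun z ω => (X ω : ℂ) ^ (k+1) * Complex.exp (z * X ω))
      (x₀ := z₀) (bound := fun ω => |X ω|^(k+1) * Real.exp (α/7 * |X ω|))
      (Metric.ball_mem_nhds z₀ hε) (Filter.Eventually.of_forall fun z => hImeas k z)
      (hIint k z₀ hz₀.le) (hImeas (k+1) z₀)
      (Filter.Eventually.of_forall fun ω => ?_)
      (hGint (k+1))
      (Filter.Eventually.of_forall fun ω => ?_)
    · exact this.2
    · intro x hx
      refine hnormIntLe (k+1) x ?_ ω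
      have h' := mem_ball_iff_norm.mp hx
      calc ‖x‖ = ‖x - z₀ + z₀‖ := by ring_nf
        _ ≤ ‖x - z₀‖ + ‖z₀‖ := norm_add_le _ _
        _ ≤ α/7 := by linarith
    · intro x hx
      have h1 : HasDerivAt (fun z : ℂ => z * (X ω : ℂ)) ((X ω : ℂ)) x := by
        simpa using (hasDerivAt_id x).mul_const ((X ω : ℂ))
      have h2 := (h1.cexp).const_mul ((X ω : ℂ) ^ k)
      convert h2 using 1
      · rfl
      ring
  -- numeric constants
  have hC2 : 2 * (7*(2:ℕ)/(6*e1*α))^(2:ℕ) ≤ 1.52 / α^2 := by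
    have h1 : 7*((2:ℕ):ℝ)/(6*e1*α) ≤ 0.87/α := by
      rw [div_le_div_iff₀ (by positivity) hα]
      push_cast
      nlinarith
    calc 2 * (7*((2:ℕ):ℝ)/(6*e1*α))^(2:ℕ) ≤ 2 * (0.87/α)^(2:ℕ) := by
          gcongr
      _ = 2 * 0.87^2 / α^2 := by rw [div_pow]; ring
      _ ≤ 1.52 / α^2 :=
          div_le_div₀ (by norm_num) (by norm_num) (by positivity) le_rfl
  have hC3 : 2 * (7*(3:ℕ)/(6*e1*α))^(3:ℕ) ≤ 4.4 / α^3 := by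
    have h1 : 7*((3:ℕ):ℝ)/(6*e1*α) ≤ 1.3/α := by
      rw [div_le_div_iff₀ (by positivity) hα]
      push_cast
      nlinarith
    calc 2 * (7*((3:ℕ):ℝ)/(6*e1*α))^(3:ℕ) ≤ 2 * (1.3/α)^(3:ℕ) := by
          gcongr
      _ = 2 * 1.3^3 / α^3 := by rw [div_pow]; ring
      _ ≤ 4.4 / α^3 :=
          div_le_div₀ (by norm_num) (by norm_num) (by positivity) le_rfl
  have hC1 : 2 * (7*(1:ℕ)/(6*e1*α))^(1:ℕ) ≤ 0.88 / α := by
    rw [pow_one]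
    push_cast
    rw [show (2:ℝ) * (7*1/(6*e1*α)) = 7/(3*e1*α) by field_simp; ring]
    rw [div_le_div_iff₀ (by positivity) hα]
    nlinarith
  -- basic norm bounds for Fm
  have hFnorm : ∀ (k : ℕ) (z : ℂ), ‖z‖ ≤ α/7 → ‖Fm P X k z‖ ≤ 2 * (7*k/(6*e1*α))^k := by
    intro k z hz
    calc ‖Fm P X k z‖ ≤ ∫ ω, ‖(X ω : ℂ) ^ k * Complex.exp (z * X ω)‖ ∂P :=
          norm_integral_le_integral_norm _
      _ ≤ ∫ ω, |X ω|^k * Real.exp (α/7 * |X ω|) ∂P :=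
          integral_mono (hIint k z hz).norm (hGint k) (fun ω => hnormIntLe k z hz ω)
      _ ≤ 2 * (7*k/(6*e1*α))^k := hGval k
  have hF2bnd : ∀ z : ℂ, ‖z‖ ≤ α/7 → ‖Fm P X 2 z‖ ≤ 1.52 / α^2 :=
    fun z hz => (hFnorm 2 z hz).trans (by exact_mod_cast hC2)
  have hF3bnd : ∀ z : ℂ, ‖z‖ ≤ α/7 → ‖Fm P X 3 z‖ ≤ 4.4 / α^3 :=
    fun z hz => (hFnorm 3 z hz).trans (by exact_mod_cast hC3)
  -- first-order bounds
  have hptsub : ∀ (z : ℂ), ‖z‖ ≤ α/7 → ∀ ω : Ω,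
      ‖Complex.exp (z * X ω) - 1‖ ≤ ‖z‖ * (|X ω|^1 * Real.exp (α/7 * |X ω|)) := by
    intro z hz ω
    have h := aux_exp_sub_one (z * X ω)
    have hn : ‖z * (X ω : ℂ)‖ = ‖z‖ * |X ω| := by
      rw [norm_mul, Complex.norm_real, Real.norm_eq_abs]
    rw [hn] at h
    refine h.trans ?_
    rw [pow_one, ← mul_assoc]
    gcongr
  have hF0sub : ∀ z : ℂ, ‖z‖ ≤ α/7 → ‖Fm P X 0 z - 1‖ ≤ ‖z‖ * (0.88/α) := by
    intro z hz
    have heq : Fm P X 0 z - 1 = ∫ ω, (Complex.exp (z * X ω) - 1) ∂P := by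
      rw [integral_sub (by simpa using hIint 0 z hz) (integrable_const 1)]
      simp [Fm, measure_univ]
    rw [heq]
    calc ‖∫ ω, (Complex.exp (z * X ω) - 1) ∂P‖
        ≤ ∫ ω, ‖Complex.exp (z * X ω) - 1‖ ∂P := norm_integral_le_integral_norm _
      _ ≤ ∫ ω, ‖z‖ * (|X ω|^1 * Real.exp (α/7 * |X ω|)) ∂P := by
          refine integral_mono ?_ ((hGint 1).const_mul _) (fun ω => hptsub z hz ω)
          exact ((by simpa using hIint 0 z hz : Integrable (fun ω => Complex.exp (z * X ω)) P).sub
            (integrable_const 1)).norm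
      _ = ‖z‖ * ∫ ω, |X ω|^1 * Real.exp (α/7 * |X ω|) ∂P := integral_const_mul _ _
      _ ≤ ‖z‖ * (2 * (7*(1:ℕ)/(6*e1*α))^(1:ℕ)) := by
          have h := hGval 1
          gcongr
      _ ≤ ‖z‖ * (0.88/α) := by gcongr
  -- integrability of X, X²
  have hXint : Integrable X P := by
    refine (hGint 1).mono' hmeas.aestronglyMeasurable ?_
    refine Filter.Eventually.of_forall fun ω => ?_
    rw [Real.norm_eq_abs, pow_one]
    nlinarith [abs_nonneg (X ω), Real.one_le_exp (by positivity : (0:ℝ) ≤ α/7 * |X ω|)]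
  have hXCint : Integrable (fun ω => (X ω : ℂ)) P := hXint.ofReal
  have hXCzero : ∫ ω, (X ω : ℂ) ∂P = 0 := by
    have h0 : ∫ ω, (X ω : ℂ) ∂P = ((∫ ω, X ω ∂P : ℝ) : ℂ) := integral_ofReal
    rw [h0, hmean, Complex.ofReal_zero]
  have hF1bnd : ∀ z : ℂ, ‖z‖ ≤ α/7 → ‖Fm P X 1 z‖ ≤ ‖z‖ * (1.52/α^2) := by
    intro z hz
    have hsplit : (fun ω => (X ω : ℂ) * (Complex.exp (z * X ω) - 1))
        = fun ω => (X ω : ℂ)^1 * Complex.exp (z * X ω) - (X ω : ℂ) := by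
      funext ω; ring
    have hi : Integrable (fun ω => (X ω : ℂ) * (Complex.exp (z * X ω) - 1)) P := by
      rw [hsplit]; exact (hIint 1 z hz).sub hXCint
    have heq : Fm P X 1 z = ∫ ω, (X ω : ℂ) * (Complex.exp (z * X ω) - 1) ∂P := by
      rw [hsplit, integral_sub (hIint 1 z hz) hXCint, hXCzero, sub_zero]
      rfl
    rw [heq]
    calc ‖∫ ω, (X ω : ℂ) * (Complex.exp (z * X ω) - 1) ∂P‖
        ≤ ∫ ω, ‖(X ω : ℂ) * (Complex.exp (z * X ω) - 1)‖ ∂P := norm_integral_le_integral_norm _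
      _ ≤ ∫ ω, ‖z‖ * (|X ω|^2 * Real.exp (α/7 * |X ω|)) ∂P := by
          refine integral_mono ?_ ((hGint 2).const_mul _) (fun ω => ?_)
          · exact hi.norm
          · rw [norm_mul, Complex.norm_real, Real.norm_eq_abs]
            calc |X ω| * ‖Complex.exp (z * X ω) - 1‖
                ≤ |X ω| * (‖z‖ * (|X ω|^1 * Real.exp (α/7 * |X ω|))) := by
                  gcongr
                  exact hptsub z hz ω
              _ = ‖z‖ * (|X ω|^2 * Real.exp (α/7 * |X ω|)) := by ring
      _ = ‖z‖ * ∫ ω, |X ω|^2 * Real.exp (α/7 * |X ω|) ∂P := integral_const_mul _ _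
      _ ≤ ‖z‖ * (2 * (7*(2:ℕ)/(6*e1*α))^(2:ℕ)) := by
          have h := hGval 2
          gcongr
      _ ≤ ‖z‖ * (1.52/α^2) := by gcongr
  -- values at 0
  have hF0z : Fm P X 0 0 = 1 := by
    simp [Fm, measure_univ]
  have hF1z : Fm P X 1 0 = 0 := by
    have h0 : Fm P X 1 0 = ∫ ω, (X ω : ℂ) ∂P := by
      simp [Fm]
    rw [h0, hXCzero]
  have hF2z : Fm P X 2 0 = 1 := by
    have h0 : Fm P X 2 0 = ∫ ω, ((X ω ^ 2 : ℝ) : ℂ) ∂P := by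
      simp [Fm]
    have h2 : ∫ ω, ((X ω ^ 2 : ℝ) : ℂ) ∂P = ((∫ ω, X ω ^ 2 ∂P : ℝ) : ℂ) := integral_ofReal
    rw [h0, h2, hvar, Complex.ofReal_one]
  -- nonvanishing and slit plane membership
  have hslit : ∀ z : ℂ, ‖z‖ ≤ α/7 → Fm P X 0 z ∈ Complex.slitPlane := by
    intro z hz
    have h := hF0sub z hz
    have h2 : ‖z‖ * (0.88/α) ≤ 0.88/7 := by
      calc ‖z‖ * (0.88/α) ≤ (α/7) * (0.88/α) := by gcongr
        _ = 0.88/7 := by field_simp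
    have h3 : |(Fm P X 0 z - 1).re| ≤ 0.88/7 := by
      calc |(Fm P X 0 z - 1).re| ≤ ‖Fm P X 0 z - 1‖ := Complex.abs_re_le_norm _
        _ ≤ 0.88/7 := h.trans h2
    rw [Complex.sub_re, Complex.one_re] at h3
    rw [Complex.mem_slitPlane_iff]
    left
    have := abs_le.mp h3
    linarith [this.1]
  have hF0ne : ∀ z : ℂ, ‖z‖ ≤ α/7 → Fm P X 0 z ≠ 0 :=
    fun z hz => Complex.slitPlane_ne_zero (hslit z hz)
  have hF0lb : ∀ z : ℂ, ‖z‖ ≤ α/8 → (0.89:ℝ) ≤ ‖Fm P X 0 z‖ := by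
    intro z hz
    have hz7 : ‖z‖ ≤ α/7 := by linarith
    have h := hF0sub z hz7
    have h2 : ‖z‖ * (0.88/α) ≤ 0.11 := by
      calc ‖z‖ * (0.88/α) ≤ (α/8) * (0.88/α) := by gcongr
        _ = 0.11 := by field_simp; ring
    have h3 : ‖(1:ℂ)‖ - ‖Fm P X 0 z‖ ≤ ‖Fm P X 0 z - 1‖ := by
      rw [norm_sub_rev]
      exact norm_sub_norm_le _ _
    rw [norm_one] at h3
    linarith
  -- K as log of Fm 0
  have hKlog : K = fun z => Complex.log (Fm P X 0 z) := by
    funext z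
    rw [hK z]
    congr 1
    simp [Fm]
  -- membership lemma
  have hmem : ∀ z : ℂ, ‖z‖ < α/7 ↔ z ∈ Metric.ball (0:ℂ) (α/7) := by
    intro z; rw [Metric.mem_ball, dist_zero_right]
  -- first derivative of K
  have hK1 : ∀ z : ℂ, ‖z‖ < α/7 →
      HasDerivAt K (Fm P X 1 z / Fm P X 0 z) z := by
    intro z hz
    rw [hKlog]
    exact (hDeriv 0 z hz).clog (hslit z hz.le)
  -- second derivative data
  have hg2 : ∀ z : ℂ, ‖z‖ < α/7 →
      HasDerivAt (fun w => Fm P X 1 w / Fm P X 0 w)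
        (Fm P X 2 z / Fm P X 0 z - (Fm P X 1 z / Fm P X 0 z)^2) z := by
    intro z hz
    have h := (hDeriv 1 z hz).div (hDeriv 0 z hz) (hF0ne z hz.le)
    convert h using 1
    · rfl
    · rfl
    · rfl
    simp only [Pi.div_apply, Nat.reduceAdd, Nat.reduceSub, zero_add, Nat.cast_ofNat]
    field_simp [hF0ne z hz.le]
  have hg3 : ∀ z : ℂ, ‖z‖ < α/7 →
      HasDerivAt (fun w => Fm P X 2 w / Fm P X 0 w - (Fm P X 1 w / Fm P X 0 w)^2)
        (Fm P X 3 z / Fm P X 0 z - 3 * (Fm P X 2 z * Fm P X 1 z) / (Fm P X 0 z)^2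
          + 2 * (Fm P X 1 z / Fm P X 0 z)^3) z := by
    intro z hz
    have h1 := (hDeriv 2 z hz).div (hDeriv 0 z hz) (hF0ne z hz.le)
    have h2 := ((hDeriv 1 z hz).div (hDeriv 0 z hz) (hF0ne z hz.le)).pow 2
    have h := h1.sub h2
    convert h using 1
    · rfl
    · rfl
    · rfl
    simp only [Pi.div_apply, Nat.reduceAdd, Nat.reduceSub, zero_add, Nat.cast_ofNat]
    field_simp [hF0ne z hz.le]
    ring
  -- identification of iterated derivatives on the ball
  have hdK : Set.EqOn (deriv K) (fun w => Fm P X 1 w / Fm P X 0 w)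
      (Metric.ball (0:ℂ) (α/7)) := by
    intro w hw
    exact (hK1 w ((hmem w).mpr hw)).deriv
  have hK2eq : ∀ z : ℂ, ‖z‖ < α/7 → iteratedDeriv 2 K z
      = Fm P X 2 z / Fm P X 0 z - (Fm P X 1 z / Fm P X 0 z)^2 := by
    intro z hz
    have hzb : z ∈ Metric.ball (0:ℂ) (α/7) := (hmem z).mp hz
    have h1 : iteratedDeriv 2 K z = deriv (deriv K) z := by
      rw [iteratedDeriv_succ, iteratedDeriv_one]
    rw [h1]
    have h2 : deriv K =ᶠ[nhds z] (fun w => Fm P X 1 w / Fm P X 0 w) :=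
      hdK.eventuallyEq_of_mem (Metric.isOpen_ball.mem_nhds hzb)
    rw [h2.deriv_eq]
    exact (hg2 z hz).deriv
  have hdK2 : Set.EqOn (iteratedDeriv 2 K)
      (fun w => Fm P X 2 w / Fm P X 0 w - (Fm P X 1 w / Fm P X 0 w)^2)
      (Metric.ball (0:ℂ) (α/7)) := by
    intro w hw
    exact hK2eq w ((hmem w).mpr hw)
  have hK2deriv : ∀ z : ℂ, ‖z‖ < α/7 → HasDerivAt (iteratedDeriv 2 K)
      (Fm P X 3 z / Fm P X 0 z - 3 * (Fm P X 2 z * Fm P X 1 z) / (Fm P X 0 z)^2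
        + 2 * (Fm P X 1 z / Fm P X 0 z)^3) z := by
    intro z hz
    have hzb : z ∈ Metric.ball (0:ℂ) (α/7) := (hmem z).mp hz
    refine (hg3 z hz).congr_of_eventuallyEq ?_
    exact hdK2.eventuallyEq_of_mem (Metric.isOpen_ball.mem_nhds hzb)
  have hK3eq : ∀ z : ℂ, ‖z‖ < α/7 → iteratedDeriv 3 K z
      = Fm P X 3 z / Fm P X 0 z - 3 * (Fm P X 2 z * Fm P X 1 z) / (Fm P X 0 z)^2
        + 2 * (Fm P X 1 z / Fm P X 0 z)^3 := by
    intro z hz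
    rw [iteratedDeriv_succ]
    exact (hK2deriv z hz).deriv
  -- the main bound on the third derivative expression
  have hbound : ∀ z : ℂ, ‖z‖ ≤ α/8 →
      ‖Fm P X 3 z / Fm P X 0 z - 3 * (Fm P X 2 z * Fm P X 1 z) / (Fm P X 0 z)^2
        + 2 * (Fm P X 1 z / Fm P X 0 z)^3‖ ≤ 8 / α^3 := by
    intro z hz
    have hz7 : ‖z‖ ≤ α/7 := by linarith
    have ha : ‖Fm P X 1 z‖ ≤ 0.19/α := by
      refine (hF1bnd z hz7).trans ?_
      calc ‖z‖ * (1.52/α^2) ≤ (α/8) * (1.52/α^2) := by gcongr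
        _ = 0.19/α := by field_simp; ring
    have hb : ‖Fm P X 2 z‖ ≤ 1.52/α^2 := hF2bnd z hz7
    have hc : ‖Fm P X 3 z‖ ≤ 4.4/α^3 := hF3bnd z hz7
    have hd : (0.89:ℝ) ≤ ‖Fm P X 0 z‖ := hF0lb z hz
    have hd0 : (0:ℝ) < ‖Fm P X 0 z‖ := by linarith
    have htri : ‖Fm P X 3 z / Fm P X 0 z - 3 * (Fm P X 2 z * Fm P X 1 z) / (Fm P X 0 z)^2
        + 2 * (Fm P X 1 z / Fm P X 0 z)^3‖
        ≤ ‖Fm P X 3 z‖ / ‖Fm P X 0 z‖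
          + 3 * (‖Fm P X 2 z‖ * ‖Fm P X 1 z‖) / ‖Fm P X 0 z‖^2
          + 2 * (‖Fm P X 1 z‖ / ‖Fm P X 0 z‖)^3 := by
      calc ‖Fm P X 3 z / Fm P X 0 z - 3 * (Fm P X 2 z * Fm P X 1 z) / (Fm P X 0 z)^2
          + 2 * (Fm P X 1 z / Fm P X 0 z)^3‖
          ≤ ‖Fm P X 3 z / Fm P X 0 z - 3 * (Fm P X 2 z * Fm P X 1 z) / (Fm P X 0 z)^2‖
            + ‖2 * (Fm P X 1 z / Fm P X 0 z)^3‖ := norm_add_le _ _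
        _ ≤ ‖Fm P X 3 z / Fm P X 0 z‖ + ‖3 * (Fm P X 2 z * Fm P X 1 z) / (Fm P X 0 z)^2‖
            + ‖2 * (Fm P X 1 z / Fm P X 0 z)^3‖ :=
            add_le_add_left (norm_sub_le _ _) _
        _ = ‖Fm P X 3 z‖ / ‖Fm P X 0 z‖
            + 3 * (‖Fm P X 2 z‖ * ‖Fm P X 1 z‖) / ‖Fm P X 0 z‖^2
            + 2 * (‖Fm P X 1 z‖ / ‖Fm P X 0 z‖)^3 := by
            rw [norm_div, norm_div, norm_mul, norm_mul, norm_mul, norm_pow, norm_pow, norm_div]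
            norm_num
    refine htri.trans ?_
    have step : ‖Fm P X 3 z‖ / ‖Fm P X 0 z‖
          + 3 * (‖Fm P X 2 z‖ * ‖Fm P X 1 z‖) / ‖Fm P X 0 z‖^2
          + 2 * (‖Fm P X 1 z‖ / ‖Fm P X 0 z‖)^3
        ≤ (4.4/α^3) / 0.89 + 3 * ((1.52/α^2) * (0.19/α)) / 0.89^2
          + 2 * ((0.19/α) / 0.89)^3 := by
      gcongr <;> positivity
    refine step.trans ?_
    have heq : (4.4/α^3) / 0.89 + 3 * ((1.52/α^2) * (0.19/α)) / 0.89^2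
        + 2 * ((0.19/α) / 0.89)^3
        = (4.4/0.89 + 3 * (1.52*0.19) / 0.89^2 + 2 * (0.19/0.89)^3) / α^3 := by
      field_simp
    rw [heq]
    gcongr
    norm_num
  -- α² ≤ 2
  have hX2int : Integrable (fun ω => X ω^2) P := by
    refine (hGint 2).mono' (hmeas.pow_const 2).aestronglyMeasurable ?_
    refine Filter.Eventually.of_forall fun ω => ?_
    rw [Real.norm_eq_abs, abs_of_nonneg (sq_nonneg _), ← sq_abs]
    nlinarith [sq_nonneg (|X ω|), Real.one_le_exp (by positivity : (0:ℝ) ≤ α/7 * |X ω|)]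
  have hα2 : α^2 ≤ 2 := by
    have hpt : ∀ ω : Ω, X ω^2 ≤ (2/e1)^2/α^2 * Real.exp (α * |X ω|) := by
      intro ω
      have h := aux_pow_le_exp 2 (x := α * |X ω|) (by positivity)
      rw [← he1def] at h
      have h2 : (α * |X ω|)^2 = α^2 * (X ω)^2 := by
        rw [mul_pow, sq_abs]
      push_cast at h
      rw [h2] at h
      rw [div_mul_eq_mul_div, le_div_iff₀ (by positivity : (0:ℝ) < α^2)]
      nlinarith [h]
    have h1 : (1:ℝ) ≤ (2/e1)^2/α^2 * 2 := by
      calc (1:ℝ) = ∫ ω, X ω^2 ∂P := hvar.symm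
        _ ≤ ∫ ω, (2/e1)^2/α^2 * Real.exp (α * |X ω|) ∂P :=
            integral_mono hX2int (hMint.const_mul _) hpt
        _ = (2/e1)^2/α^2 * ∫ ω, Real.exp (α * |X ω|) ∂P := integral_const_mul _ _
        _ ≤ (2/e1)^2/α^2 * 2 := by
            gcongr
    have h2 : α^2 * e1^2 ≤ 8 := by
      rw [div_pow, div_div, div_mul_eq_mul_div, le_div_iff₀ (by positivity)] at h1
      nlinarith
    nlinarith [he1, mul_pos hα hα]
  -- finish
  constructor
  · intro z hz
    have hz8 : ‖z‖ ≤ α/8 := by linarith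
    have hz7 : ‖z‖ < α/7 := by linarith
    rw [hK3eq z hz7]
    exact hbound z hz8
  · intro z hz
    have hz8 : ‖z‖ ≤ α/8 := by nlinarith [norm_nonneg z]
    have hK2zero : iteratedDeriv 2 K 0 = 1 := by
      rw [hK2eq 0 (by rw [norm_zero]; positivity)]
      rw [hF0z, hF1z, hF2z]
      norm_num
    have hconv := (convex_closedBall (0:ℂ) (α/8)).norm_image_sub_le_of_norm_hasDerivWithin_le
      (f := iteratedDeriv 2 K)
      (f' := fun w => Fm P X 3 w / Fm P X 0 w - 3 * (Fm P X 2 w * Fm P X 1 w) / (Fm P X 0 w)^2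
        + 2 * (Fm P X 1 w / Fm P X 0 w)^3)
      (C := 8/α^3)
      (fun w hw => by
        have hw8 : ‖w‖ ≤ α/8 := by
          rw [Metric.mem_closedBall, dist_zero_right] at hw
          exact hw
        have hw7 : ‖w‖ < α/7 := by linarith
        exact (hK2deriv w hw7).hasDerivWithinAt)
      (fun w hw => by
        have hw8 : ‖w‖ ≤ α/8 := by
          rw [Metric.mem_closedBall, dist_zero_right] at hw
          exact hw
        exact hbound w hw8)
      (Metric.mem_closedBall_self (by positivity))
      (by rw [Metric.mem_closedBall, dist_zero_right]; exact hz8)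
    rw [hK2zero] at hconv
    have : ‖iteratedDeriv 2 K z - 1‖ ≤ 8/α^3 * ‖z‖ := by
      simpa using hconv
    refine this.trans ?_
    calc 8/α^3 * ‖z‖ ≤ 8/α^3 * (α^3/16) := by gcongr
      _ = 1/2 := by field_simp; ring
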